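/- Fix a prime p, integers n ≥ 1 and 0 ≤ k ≤ n, and a ∈ Z_p. Writing δ^k(a + p^n u) = Σ_{j=0}^{p^k} c^k_{a,j} u^j as a polynomial in u, for every j with 2 ≤ j ≤ p^k the coefficient satisfies |c^k_{a,j}|_p ≤ p^{-((n-k+1)j - 1)}. -/

import Mathlib

open Polynomial

section Aux

variable {p : ℕ} [Fact p.Prime]

private lemma padic_norm_sum_le {ι : Type*} (s : Finset ι) (f : ι → ℚ_[p]) (C : ℝ)
    (hC : 0 ≤ C) (h : ∀ i ∈ s, ‖f i‖ ≤ C) : ‖∑ i ∈ s, f i‖ ≤ C := by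
  classical
  induction s using Finset.cons_induction with
  | empty => simpa using hC
  | cons a s ha ih =>
    rw [Finset.sum_cons]
    refine le_trans (Padic.nonarchimedean _ _) (max_le (h a (Finset.mem_cons_self a s))
      (ih fun i hi => h i (Finset.mem_cons_of_mem hi)))

private lemma coeff_pow_le (G : ℚ_[p][X]) (s r : ℝ) (hs : 0 ≤ s) (hr : 0 ≤ r)
    (h : ∀ l, ‖G.coeff l‖ ≤ s * r ^ l) :
    ∀ i j : ℕ, ‖(G ^ i).coeff j‖ ≤ s ^ i * r ^ j := by
  intro i
  induction i with
  | zero =>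
    intro j
    rcases Nat.eq_zero_or_pos j with rfl | hj
    · simp
    · rw [pow_zero, Polynomial.coeff_one, if_neg (by omega)]
      simp only [norm_zero, pow_zero, one_mul]
      positivity
  | succ i ih =>
    intro j
    rw [pow_succ, Polynomial.coeff_mul]
    apply padic_norm_sum_le _ _ _ (by positivity)
    intro x hx
    rw [Finset.HasAntidiagonal.mem_antidiagonal] at hx
    rw [norm_mul]
    calc ‖(G ^ i).coeff x.1‖ * ‖G.coeff x.2‖ ≤ (s ^ i * r ^ x.1) * (s * r ^ x.2) :=
          mul_le_mul (ih x.1) (h x.2) (norm_nonneg _) (by positivity)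
      _ = s ^ (i + 1) * r ^ (x.1 + x.2) := by ring
      _ = s ^ (i + 1) * r ^ j := by rw [hx]

private lemma coeff_pow_eq_zero {R : Type*} [CommSemiring R] (G : R[X]) (hG : G.coeff 0 = 0)
    (i j : ℕ) (hj : j < i) : (G ^ i).coeff j = 0 := by
  obtain ⟨h, hGh⟩ := Polynomial.X_dvd_iff.2 hG
  rw [hGh, mul_pow, mul_comm, Polynomial.coeff_mul_X_pow', if_neg (by omega)]

/-- The polynomial representing `δ^[k] (a + p^n u)` as a function of `u`. -/
private noncomputable def Qp (p : ℕ) [Fact p.Prime] (a : ℤ_[p]) (n : ℕ) : ℕ → ℚ_[p][X]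
  | 0 => C (a : ℚ_[p]) + C ((p : ℚ_[p]) ^ n) * X
  | k + 1 => C ((p : ℚ_[p])⁻¹) * (Qp p a n k - (Qp p a n k) ^ p)

private lemma Qp_eval (δ : ℤ_[p] → ℤ_[p]) (hδ : ∀ x : ℤ_[p], (p : ℤ_[p]) * δ x = x - x ^ p)
    (a : ℤ_[p]) (n : ℕ) (k : ℕ) (u : ℤ_[p]) :
    (Qp p a n k).eval (u : ℚ_[p]) = ((δ^[k] (a + (p : ℤ_[p]) ^ n * u) : ℤ_[p]) : ℚ_[p]) := by
  have hp0 : ((p : ℚ_[p])) ≠ 0 :=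
    Nat.cast_ne_zero.mpr (Fact.out : p.Prime).ne_zero
  induction k with
  | zero =>
    simp only [Qp, Function.iterate_zero, id, eval_add, eval_mul, eval_C, eval_X]
    push_cast
    ring
  | succ k ih =>
    rw [Function.iterate_succ_apply']
    set y := δ^[k] (a + (p : ℤ_[p]) ^ n * u) with hy
    have h1 : ((δ y : ℤ_[p]) : ℚ_[p]) = (p : ℚ_[p])⁻¹ * ((y : ℚ_[p]) - (y : ℚ_[p]) ^ p) := by
      have h2 := congrArg (fun z : ℤ_[p] => (z : ℚ_[p])) (hδ y)
      push_cast at h2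
      field_simp
      linear_combination h2
    simp only [Qp, eval_mul, eval_sub, eval_pow, eval_C, ih, h1]

private lemma Qp_coeff_zero_norm (δ : ℤ_[p] → ℤ_[p])
    (hδ : ∀ x : ℤ_[p], (p : ℤ_[p]) * δ x = x - x ^ p) (a : ℤ_[p]) (n k : ℕ) :
    ‖(Qp p a n k).coeff 0‖ ≤ 1 := by
  rw [Polynomial.coeff_zero_eq_eval_zero]
  have h0 : ((0 : ℤ_[p]) : ℚ_[p]) = 0 := by push_cast; rfl
  rw [← h0, Qp_eval δ hδ a n k 0]
  rw [PadicInt.padic_norm_e_of_padicInt]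
  exact PadicInt.norm_le_one _

private lemma Qp_coeff_bound (δ : ℤ_[p] → ℤ_[p])
    (hδ : ∀ x : ℤ_[p], (p : ℤ_[p]) * δ x = x - x ^ p) (a : ℤ_[p]) (n : ℕ) :
    ∀ k : ℕ, k ≤ n → ∀ j : ℕ, 1 ≤ j →
      ‖(Qp p a n k).coeff j‖ ≤ (p : ℝ) ^ (-(((n : ℤ) - (k : ℤ) + 1) * (j : ℤ) - 1)) := by
  have hp2 : 2 ≤ p := (Fact.out : p.Prime).two_le
  have hp0 : (0 : ℝ) < p := by positivity
  have hp0' : ((p : ℝ)) ≠ 0 := ne_of_gt hp0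
  have hp1 : (1 : ℝ) ≤ p := by exact_mod_cast Nat.one_le_of_lt hp2
  intro k
  induction k with
  | zero =>
    intro _ j hj
    simp only [Nat.cast_zero, sub_zero]
    rcases eq_or_lt_of_le hj with h1 | h2
    · -- j = 1
      have hj1 : j = 1 := h1.symm
      subst hj1
      simp only [Qp, Polynomial.coeff_add, Polynomial.coeff_C, Polynomial.coeff_C_mul,
        Polynomial.coeff_X_one, if_neg (one_ne_zero), mul_one, zero_add]
      rw [norm_pow, Padic.norm_p]
      have : ((p : ℝ))⁻¹ ^ n = (p : ℝ) ^ (-(n : ℤ)) := by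
        rw [zpow_neg, zpow_natCast, inv_pow]
      rw [this]
      apply zpow_le_zpow_right₀ hp1
      push_cast; ring_nf; omega
    · -- j ≥ 2
      have : (Qp p a n 0).coeff j = 0 := by
        simp only [Qp, Polynomial.coeff_add, Polynomial.coeff_C, Polynomial.coeff_C_mul,
          Polynomial.coeff_X]
        rw [if_neg (by omega), if_neg (by omega)]
        ring
      rw [this, norm_zero]
      positivity
  | succ k ih =>
    intro hk1 j hj
    have hk : k ≤ n := Nat.le_of_succ_le hk1
    have ihk := ih hk
    set m : ℤ := (n : ℤ) - (k : ℤ) with hmdef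
    have hm1 : (1 : ℤ) ≤ m := by
      have : (k : ℤ) + 1 ≤ (n : ℤ) := by exact_mod_cast hk1
      omega
    set Qk := Qp p a n k with hQk
    set a0 : ℚ_[p] := Qk.coeff 0 with ha0
    set G : ℚ_[p][X] := Qk - C a0 with hG
    set r : ℝ := (p : ℝ) ^ (-(m + 1)) with hr
    have hr0 : 0 ≤ r := by positivity
    have ha0n : ‖a0‖ ≤ 1 := Qp_coeff_zero_norm δ hδ a n k
    have hG0 : G.coeff 0 = 0 := by
      simp [hG, Polynomial.coeff_sub, Polynomial.coeff_C, ha0]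
    have hGcoeff : ∀ l : ℕ, 1 ≤ l → G.coeff l = Qk.coeff l := by
      intro l hl
      simp only [hG, Polynomial.coeff_sub, Polynomial.coeff_C, if_neg (by omega : ¬ l = 0),
        sub_zero]
    -- key zpow identity: p ^ (1 - (m+1)*l) = p * r ^ l
    have hzpow : ∀ l : ℕ, (p : ℝ) * r ^ l = (p : ℝ) ^ (1 - (m + 1) * (l : ℤ)) := by
      intro l
      rw [hr, ← zpow_natCast ((p : ℝ) ^ (-(m + 1))) l, ← zpow_mul,
        show (1 - (m + 1) * (l : ℤ)) = 1 + -(m + 1) * (l : ℤ) by ring, zpow_add₀ hp0', zpow_one]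
    have hGl : ∀ l : ℕ, ‖G.coeff l‖ ≤ (p : ℝ) * r ^ l := by
      intro l
      rcases Nat.eq_zero_or_pos l with rfl | hl
      · rw [hG0, norm_zero]; positivity
      · rw [hGcoeff l hl, hzpow l]
        refine le_trans (ihk l hl) (zpow_le_zpow_right₀ hp1 ?_)
        have hl' : (1 : ℤ) ≤ (l : ℤ) := by exact_mod_cast hl
        rw [hmdef]
        nlinarith
    have hGpow : ∀ i' j' : ℕ, ‖(G ^ i').coeff j'‖ ≤ (p : ℝ) ^ i' * r ^ j' :=
      coeff_pow_le G (p : ℝ) r (le_of_lt hp0) hr0 hGl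
    -- bound on coefficients of Qk ^ p
    have hQkp : ‖(Qk ^ p).coeff j‖ ≤ (p : ℝ) ^ (-(m * (j : ℤ))) := by
      have hQsplit : Qk = C a0 + G := by rw [hG]; ring
      rw [hQsplit, add_pow, Polynomial.finset_sum_coeff]
      apply padic_norm_sum_le _ _ _ (by positivity)
      intro i hi
      rw [Finset.mem_range] at hi
      have hterm : (C a0) ^ i * G ^ (p - i) * ((p.choose i : ℕ) : ℚ_[p][X])
          = C (a0 ^ i * ((p.choose i : ℕ) : ℚ_[p])) * G ^ (p - i) := by
        rw [← Polynomial.C_eq_natCast, ← Polynomial.C_pow, Polynomial.C_mul]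
        ring
      rw [hterm, Polynomial.coeff_C_mul]
      rcases Nat.lt_or_ge i p with hiplt | hipge
      case inr =>
        -- i = p, so G ^ (p - i) = 1 and its j-th coeff vanishes
        have hpi : p - i = 0 := by omega
        rw [hpi, pow_zero, Polynomial.coeff_one, if_neg (by omega), mul_zero, norm_zero]
        positivity
      rcases Nat.lt_or_ge j (p - i) with hcase | hcase
      · rw [coeff_pow_eq_zero G hG0 _ _ hcase, mul_zero, norm_zero]
        positivity
      · -- p - i ≤ j
        rcases Nat.eq_zero_or_pos i with rfl | hipos
        · -- i = 0 : coefficient is (G^p).coeff j with p ≤ j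
          simp only [pow_zero, Nat.choose_zero_right, Nat.cast_one, mul_one, one_mul,
            Nat.sub_zero] at hcase ⊢
          refine le_trans (hGpow p j) ?_
          calc (p : ℝ) ^ p * r ^ j ≤ (p : ℝ) ^ j * r ^ j :=
                mul_le_mul_of_nonneg_right (pow_le_pow_right₀ hp1 hcase) (by positivity)
            _ = (p : ℝ) ^ (-(m * (j : ℤ))) := by
                rw [hr, ← zpow_natCast (p : ℝ) j, ← zpow_natCast ((p : ℝ) ^ (-(m + 1))) j,
                  ← zpow_mul, ← zpow_add₀ hp0']
                congr 1
                ring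
        · -- 1 ≤ i < p : choose factor divisible by p
          have hip : i < p := hiplt
          have hchoose : ‖((p.choose i : ℕ) : ℚ_[p])‖ ≤ (p : ℝ)⁻¹ := by
            obtain ⟨w, hw⟩ := (Fact.out : p.Prime).dvd_choose_self hipos.ne' hip
            rw [hw]
            push_cast
            rw [norm_mul, Padic.norm_p]
            calc (p : ℝ)⁻¹ * ‖((w : ℤ) : ℚ_[p])‖ ≤ (p : ℝ)⁻¹ * 1 := by
                  gcongr
                  exact Padic.norm_int_le_one (w : ℤ)
              _ = (p : ℝ)⁻¹ := mul_one _
            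
          rw [norm_mul, norm_mul, norm_pow]
          have h1 : ‖a0‖ ^ i ≤ 1 := pow_le_one₀ (norm_nonneg _) ha0n
          have hii : p - i ≤ j := hcase
          calc ‖a0‖ ^ i * ‖((p.choose i : ℕ) : ℚ_[p])‖ * ‖(G ^ (p - i)).coeff j‖
              ≤ 1 * (p : ℝ)⁻¹ * ((p : ℝ) ^ (p - i) * r ^ j) := by
                refine mul_le_mul (mul_le_mul h1 hchoose (norm_nonneg _) zero_le_one)
                  (hGpow (p - i) j) (norm_nonneg _) (by positivity)
            _ ≤ 1 * (p : ℝ)⁻¹ * ((p : ℝ) ^ j * r ^ j) :=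
                mul_le_mul_of_nonneg_left
                  (mul_le_mul_of_nonneg_right (pow_le_pow_right₀ hp1 hii) (pow_nonneg hr0 j))
                  (by positivity)
            _ = (p : ℝ) ^ (-(1 : ℤ)) * ((p : ℝ) ^ (j : ℤ) * (p : ℝ) ^ (-(m + 1) * (j : ℤ))) := by
                rw [one_mul, hr, ← zpow_natCast (p : ℝ) j,
                  ← zpow_natCast ((p : ℝ) ^ (-(m + 1))) j, ← zpow_mul, zpow_neg, zpow_one]
            _ = (p : ℝ) ^ (-(1 : ℤ) + ((j : ℤ) + -(m + 1) * (j : ℤ))) := by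
                rw [← zpow_add₀ hp0', ← zpow_add₀ hp0']
            _ ≤ (p : ℝ) ^ (-(m * (j : ℤ))) := by
                apply zpow_le_zpow_right₀ hp1
                have hj' : (1 : ℤ) ≤ (j : ℤ) := by exact_mod_cast hj
                nlinarith
    -- bound on coeff j of Qk itself
    have hQkj : ‖Qk.coeff j‖ ≤ (p : ℝ) ^ (-(m * (j : ℤ))) := by
      refine le_trans (ihk j hj) (zpow_le_zpow_right₀ hp1 ?_)
      have hj' : (1 : ℤ) ≤ (j : ℤ) := by exact_mod_cast hj
      rw [hmdef]
      nlinarith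
    -- assemble
    have hcoeff : (Qp p a n (k + 1)).coeff j
        = (p : ℚ_[p])⁻¹ * (Qk.coeff j - (Qk ^ p).coeff j) := by
      simp [Qp, Polynomial.coeff_C_mul, Polynomial.coeff_sub, hQk]
    rw [hcoeff, norm_mul, norm_inv, Padic.norm_p, inv_inv]
    have hdiff : ‖Qk.coeff j - (Qk ^ p).coeff j‖ ≤ (p : ℝ) ^ (-(m * (j : ℤ))) := by
      have := Padic.nonarchimedean (Qk.coeff j) (-(Qk ^ p).coeff j)
      rw [← sub_eq_add_neg] at this
      rw [norm_neg] at this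
      exact le_trans this (max_le hQkj hQkp)
    calc (p : ℝ) * ‖Qk.coeff j - (Qk ^ p).coeff j‖ ≤ (p : ℝ) * (p : ℝ) ^ (-(m * (j : ℤ))) := by
          gcongr
      _ = (p : ℝ) ^ (1 + -(m * (j : ℤ))) := by
          rw [zpow_add₀ hp0', zpow_one]
      _ = (p : ℝ) ^ (-(((n : ℤ) - ((k : ℕ) + 1 : ℕ) + 1) * (j : ℤ) - 1)) := by
          congr 1
          push_cast
          rw [hmdef]
          ring

end Aux

/-- Writing `δ^k(a + p^n u) = Σ_{j=0}^{p^k} c_j u^j` as a polynomial in `u`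
(with coefficients in `ℚ_[p]`), for `2 ≤ j ≤ p^k` the coefficient satisfies
`‖c j‖ ≤ p^(-((n-k+1)j - 1))`. -/
theorem fermat_iterate_higher_coeffs (p : ℕ) [Fact p.Prime]
    (δ : ℤ_[p] → ℤ_[p]) (hδ : ∀ x : ℤ_[p], (p : ℤ_[p]) * δ x = x - x ^ p)
    (n k : ℕ) (hn : 1 ≤ n) (hk : k ≤ n) (a : ℤ_[p]) (c : ℕ → ℚ_[p])
    (hc : ∀ u : ℤ_[p],
      ((δ^[k] (a + (p : ℤ_[p]) ^ n * u) : ℤ_[p]) : ℚ_[p]) =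
        ∑ j ∈ Finset.range (p ^ k + 1), c j * (u : ℚ_[p]) ^ j) :
    ∀ j : ℕ, 2 ≤ j → j ≤ p ^ k →
      ‖c j‖ ≤ (p : ℝ) ^ (-(((n : ℤ) - (k : ℤ) + 1) * (j : ℤ) - 1)) := by
  intro j hj2 hjk
  -- the polynomial with coefficients c
  set T : ℚ_[p][X] := ∑ i ∈ Finset.range (p ^ k + 1), C (c i) * X ^ i with hT
  have hTeval : ∀ u : ℤ_[p], T.eval (u : ℚ_[p]) = ∑ i ∈ Finset.range (p ^ k + 1),
      c i * (u : ℚ_[p]) ^ i := by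
    intro u
    rw [hT, Polynomial.eval_finset_sum]
    exact Finset.sum_congr rfl fun i _ => by
      rw [Polynomial.eval_mul, Polynomial.eval_C, Polynomial.eval_pow, Polynomial.eval_X]
  have hinf : {x : ℚ_[p] | T.eval x = (Qp p a n k).eval x}.Infinite := by
    have hsub : Set.range ((↑) : ℤ_[p] → ℚ_[p]) ⊆
        {x : ℚ_[p] | T.eval x = (Qp p a n k).eval x} := by
      rintro x ⟨u, rfl⟩
      simp only [Set.mem_setOf_eq]
      rw [hTeval u, Qp_eval δ hδ a n k u, hc u]
    haveI : Infinite ℤ_[p] :=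
      Infinite.of_injective (fun i : ℕ => (i : ℤ_[p])) (Nat.cast_injective (R := ℤ_[p]))
    have hi : (Set.range ((↑) : ℤ_[p] → ℚ_[p])).Infinite :=
      Set.infinite_range_of_injective (α := ℤ_[p]) (fun x y h => Subtype.coe_injective h)
    exact hi.mono hsub
  have hTQ : T = Qp p a n k := Polynomial.eq_of_infinite_eval_eq _ _ hinf
  have hcj : c j = T.coeff j := by
    rw [hT, Polynomial.finset_sum_coeff]
    rw [Finset.sum_eq_single j]
    · rw [Polynomial.coeff_C_mul, Polynomial.coeff_X_pow, if_pos rfl, mul_one]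
    · intro b _ hb
      rw [Polynomial.coeff_C_mul, Polynomial.coeff_X_pow, if_neg (Ne.symm hb), mul_zero]
    · intro h
      exfalso
      exact h (Finset.mem_range.mpr (by omega))
  rw [hcj, hTQ]
  exact Qp_coeff_bound δ hδ a n k hk j (by omega)
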